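/- Let G be a finite simple graph with vertex set V and h : V → ℝ an injective height function. Let u and v be adjacent vertices with upperlink_h(v) = {u}; suppose u is a maximum with respect to h, the subgraph induced on the neighbourhood of u is a cycle on at least 3 vertices, and no vertex separates u and v. Then for the swapped height function h': v is a maximum with respect to h'; the upper link of u with respect to h' is exactly {v}; and the lower link of u with respect to h' equals N(u) \ {v} and is nonempty and connected. Hence u is regular with respect to h' and the maximum shifts from u to v. -/

import Mathlib

/-- The lower link of a vertex `w`: the set of neighbours of `w` strictly below `w`. -/
def lowerLink {V : Type*} (G : SimpleGraph V) (h : V → ℝ) (w : V) : Set V :=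
  {x | G.Adj w x ∧ h x < h w}

/-- The upper link of a vertex `w`: the set of neighbours of `w` strictly above `w`. -/
def upperLink {V : Type*} (G : SimpleGraph V) (h : V → ℝ) (w : V) : Set V :=
  {x | G.Adj w x ∧ h w < h x}

/-- The height function obtained from `h` by swapping the heights of `u` and `v`. -/
def swapH {V : Type*} [DecidableEq V] (h : V → ℝ) (u v : V) : V → ℝ :=
  fun w => if w = v then h u else if w = u then h v else h w

open SimpleGraph

lemma punctured_cycle_connected (m : ℕ) (k : Fin (m + 3)) :
    ((cycleGraph (m + 3)).induce {x | x ≠ k}).Connected := by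
  have hne : ∀ j : Fin (m + 2), k + 1 + (⟨j.val, by omega⟩ : Fin (m + 3)) ≠ k := by
    intro j hj
    have h1 : (1 : Fin (m + 3)) + ⟨j.val, by omega⟩ = 0 := by
      have h0 := congrArg (fun z => z - k) hj
      simpa [add_comm, add_assoc, add_sub_cancel_right, sub_self] using h0
    have h2 := congrArg Fin.val h1
    rw [Fin.val_add] at h2
    have hv1 : (1 : Fin (m + 3)).val = 1 := rfl
    simp only [Fin.val_mk] at h2
    rw [hv1, Nat.mod_eq_of_lt (by have := j.isLt; omega)] at h2
    simp at h2
  let f : Fin (m + 2) → {x : Fin (m + 3) // x ≠ k} :=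
    fun j => ⟨k + 1 + (⟨j.val, by omega⟩ : Fin (m + 3)), hne j⟩
  have key : ∀ a b : Fin (m + 2), a.val + 1 = b.val →
      (⟨b.val, by omega⟩ : Fin (m + 3)) - ⟨a.val, by omega⟩ = 1 := by
    intro a b hab
    have hb : (⟨b.val, by omega⟩ : Fin (m + 3)) = ⟨a.val, by omega⟩ + 1 := by
      apply Fin.ext
      rw [Fin.val_add]
      have hv1 : (1 : Fin (m + 3)).val = 1 := rfl
      simp only [Fin.val_mk, hv1]
      rw [Nat.mod_eq_of_lt (by have := a.isLt; omega)]
      omega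
    rw [hb]; open Fin.CommRing in ring
  have hadj : ∀ i j : Fin (m + 2), (pathGraph (m + 2)).Adj i j →
      ((cycleGraph (m + 3)).induce {x | x ≠ k}).Adj (f i) (f j) := by
    intro i j hij
    rw [pathGraph_adj] at hij
    show (cycleGraph (m + 1 + 2)).Adj (k + 1 + (⟨i.val, by omega⟩ : Fin (m + 3)))
      (k + 1 + (⟨j.val, by omega⟩ : Fin (m + 3)))
    rw [cycleGraph_adj]
    rcases hij with hij | hij
    · right
      have h3 : k + 1 + (⟨j.val, by omega⟩ : Fin (m + 3)) - (k + 1 + ⟨i.val, by omega⟩)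
          = (⟨j.val, by omega⟩ : Fin (m + 3)) - ⟨i.val, by omega⟩ := by open Fin.CommRing in ring
      exact h3.trans (key i j hij)
    · left
      have h3 : k + 1 + (⟨i.val, by omega⟩ : Fin (m + 3)) - (k + 1 + ⟨j.val, by omega⟩)
          = (⟨i.val, by omega⟩ : Fin (m + 3)) - ⟨j.val, by omega⟩ := by open Fin.CommRing in ring
      exact h3.trans (key j i hij)
  have hsurj : Function.Surjective f := by
    rintro ⟨a, ha⟩
    have hd : (a - (k + 1)).val < m + 2 := by
      have h1 : (a - (k + 1)).val < m + 3 := (a - (k + 1)).isLt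
      by_contra h
      have heq : a - (k + 1) = (⟨m + 2, by omega⟩ : Fin (m + 3)) :=
        Fin.ext (show (a - (k + 1)).val = m + 2 by omega)
      apply ha
      have h2 : (⟨m + 2, by omega⟩ : Fin (m + 3)) = -1 := by
        apply Fin.ext
        simp only [Fin.val_mk]
        rw [Fin.coe_neg_one]
      have h3 := congrArg (fun z => z + (k + 1)) heq
      rw [sub_add_cancel, h2] at h3
      rw [h3]; open Fin.CommRing in ring
    refine ⟨⟨(a - (k + 1)).val, hd⟩, Subtype.ext ?_⟩
    show k + 1 + (⟨(a - (k + 1)).val, by omega⟩ : Fin (m + 3)) = a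
    have h4 : (⟨(a - (k + 1)).val, by omega⟩ : Fin (m + 3)) = a - (k + 1) := Fin.ext rfl
    rw [h4]; open Fin.CommRing in ring
  exact Connected.map ⟨f, fun h => hadj _ _ h⟩ hsurj (pathGraph_connected (m + 1))

/-- Shift event moving a maximum from `u` to `v`: if `u` is the unique neighbour of `v`
above `v`, `u` is a maximum whose link is a cycle on at least 3 vertices, and no vertex
separates `u` and `v`, then after swapping heights `v` is a maximum, the upper link of
`u` is exactly `{v}`, and the lower link of `u` is `N(u) \ {v}`, nonempty and connected;
hence `u` is regular. -/
theorem shift_event_maximum {V : Type*} [Fintype V] [DecidableEq V]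
    (G : SimpleGraph V) (h : V → ℝ) (hinj : Function.Injective h) (u v : V)
    (huv : G.Adj u v)
    (hupv : upperLink G h v = {u})
    (hmax : upperLink G h u = ∅)
    (hcyc : ∃ n, 3 ≤ n ∧
      Nonempty ((G.induce (G.neighborSet u)) ≃g SimpleGraph.cycleGraph n))
    (hsep : ∀ w, w ≠ u → w ≠ v → ¬(h v < h w ∧ h w < h u)) :
    upperLink G (swapH h u v) v = ∅ ∧
    upperLink G (swapH h u v) u = {v} ∧
    lowerLink G (swapH h u v) u = G.neighborSet u \ {v} ∧
    (lowerLink G (swapH h u v) u).Nonempty ∧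
    (G.induce (lowerLink G (swapH h u v) u)).Connected := by
  have hune : u ≠ v := huv.ne
  have hvltu : h v < h u := by
    have : u ∈ upperLink G h v := by rw [hupv]; rfl
    exact this.2
  have hbelow : ∀ x, G.Adj u x → h x < h u := by
    intro x hx
    by_contra hc
    have : x ∈ upperLink G h u :=
      ⟨hx, lt_of_le_of_ne (not_lt.mp hc) (fun he => G.ne_of_adj hx (hinj he))⟩
    rw [hmax] at this
    exact this
  have hlow : ∀ x, G.Adj u x → x ≠ v → h x < h v := by
    intro x hx hxv
    have hxu : x ≠ u := fun he => G.irrefl (he ▸ hx)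
    have h1 := hsep x hxu hxv
    have h2 : ¬ h v < h x := fun hc => h1 ⟨hc, hbelow x hx⟩
    exact lt_of_le_of_ne (not_lt.mp h2) (fun he => hxv (hinj he))
  have hsv : swapH h u v v = h u := by simp [swapH]
  have hsu : swapH h u v u = h v := by simp [swapH, hune]
  have hso : ∀ w, w ≠ u → w ≠ v → swapH h u v w = h w := by
    intro w h1 h2; simp [swapH, h1, h2]
  -- Part 1
  have p1 : upperLink G (swapH h u v) v = ∅ := by
    ext x
    simp only [upperLink, Set.mem_setOf_eq, Set.mem_empty_iff_false, iff_false, not_and]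
    intro hx
    rw [hsv]
    by_cases hxu : x = u
    · subst hxu; rw [hsu]; exact not_lt.mpr hvltu.le
    · by_cases hxv : x = v
      · exact absurd hxv (G.ne_of_adj hx).symm.elim
      · rw [hso x hxu hxv]
        have : x ∉ upperLink G h v := by rw [hupv]; exact hxu
        have h2 : ¬ h v < h x := fun hc => this ⟨hx, hc⟩
        exact not_lt.mpr (le_trans (not_lt.mp h2) hvltu.le)
  -- Part 3 (proved before part 2 for convenience)
  have p3 : lowerLink G (swapH h u v) u = G.neighborSet u \ {v} := by
    ext x
    simp only [lowerLink, Set.mem_setOf_eq, Set.mem_diff, SimpleGraph.mem_neighborSet,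
      Set.mem_singleton_iff]
    rw [hsu]
    constructor
    · rintro ⟨hx, hlt⟩
      refine ⟨hx, fun hxv => ?_⟩
      subst hxv; rw [hsv] at hlt; exact absurd hlt (not_lt.mpr hvltu.le)
    · rintro ⟨hx, hxv⟩
      have hxu : x ≠ u := fun he => G.irrefl (he ▸ hx)
      rw [hso x hxu hxv]
      exact ⟨hx, hlow x hx hxv⟩
  -- Part 2
  have p2 : upperLink G (swapH h u v) u = {v} := by
    ext x
    simp only [upperLink, Set.mem_setOf_eq, Set.mem_singleton_iff]
    rw [hsu]
    constructor
    · rintro ⟨hx, hlt⟩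
      by_contra hxv
      have hxu : x ≠ u := fun he => G.irrefl (he ▸ hx)
      rw [hso x hxu hxv] at hlt
      exact absurd hlt (not_lt.mpr (hlow x hx hxv).le)
    · rintro rfl
      rw [hsv]
      exact ⟨huv, hvltu⟩
  have hconn : (G.induce (lowerLink G (swapH h u v) u)).Connected := by
    obtain ⟨n, hn3, ⟨φ⟩⟩ := hcyc
    obtain ⟨m, rfl⟩ : ∃ m, n = m + 3 := ⟨n - 3, by omega⟩
    rw [p3]
    have hv : v ∈ G.neighborSet u := huv
    set k : Fin (m + 3) := φ ⟨v, hv⟩ with hk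
    -- hom from punctured cycle to induced graph on N(u) \ {v}
    have hmem : ∀ y : {x : Fin (m + 3) // x ≠ k},
        ((φ.symm y.val : G.neighborSet u) : V) ∈ G.neighborSet u \ {v} := by
      rintro ⟨y, hy⟩
      refine ⟨(φ.symm y).2, fun hyv => hy ?_⟩
      have : φ.symm y = ⟨v, hv⟩ := Subtype.ext hyv
      rw [hk, ← this, φ.apply_symm_apply]
    let f : {x : Fin (m + 3) // x ≠ k} → ↥(G.neighborSet u \ {v}) :=
      fun y => ⟨((φ.symm y.val : G.neighborSet u) : V), hmem y⟩
    have hadj : ∀ y z, ((SimpleGraph.cycleGraph (m + 3)).induce {x | x ≠ k}).Adj y z →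
        (G.induce (G.neighborSet u \ {v})).Adj (f y) (f z) := by
      rintro ⟨y, hy⟩ ⟨z, hz⟩ hyz
      have h1 : (SimpleGraph.cycleGraph (m + 3)).Adj y z := hyz
      have h2 : (G.induce (G.neighborSet u)).Adj (φ.symm y) (φ.symm z) :=
        φ.symm.map_rel_iff.mpr h1
      exact h2
    have hsurj : Function.Surjective f := by
      rintro ⟨x, hxm, hxv⟩
      have hane : φ ⟨x, hxm⟩ ≠ k := by
        intro he
        have := φ.injective (he.trans hk.symm ▸ rfl : φ ⟨x, hxm⟩ = φ ⟨v, hv⟩)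
        exact hxv (congrArg Subtype.val this)
      refine ⟨⟨φ ⟨x, hxm⟩, hane⟩, Subtype.ext ?_⟩
      show ((φ.symm (φ ⟨x, hxm⟩) : G.neighborSet u) : V) = x
      rw [φ.symm_apply_apply]
    exact SimpleGraph.Connected.map ⟨f, fun h => hadj _ _ h⟩ hsurj
      (punctured_cycle_connected m k)
  exact ⟨p1, p2, p3, Set.nonempty_coe_sort.mp hconn.nonempty, hconn⟩
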